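/- Let P, Q be weakly compact convex sets of probability measures on a Polish space X. Then KL(P‖Q) = 0 and KL(Q‖P) = 0 if and only if P = Q. -/

import Mathlib

open MeasureTheory Real ENNReal Filter Topology
open scoped Classical
open scoped BoundedContinuousFunction

noncomputable def klDiv {X : Type*} [MeasurableSpace X] (μ ν : Measure X) : EReal :=
  if μ ≪ ν ∧ Integrable (fun x => Real.log (μ.rnDeriv ν x).toReal) μ
  then ((∫ x, Real.log (μ.rnDeriv ν x).toReal ∂μ : ℝ) : EReal)
  else ⊤

noncomputable def tvDist {X : Type*} [MeasurableSpace X] (μ ν : Measure X) : ℝ :=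
  ⨆ A : {A : Set X // MeasurableSet A}, |(μ A).toReal - (ν A).toReal|


noncomputable def genKL {X : Type*} [MeasurableSpace X]
    (P Q : Set (ProbabilityMeasure X)) : EReal :=
  ⨆ μ ∈ P, ⨅ ν ∈ Q, klDiv μ.toMeasure ν.toMeasure

noncomputable def genV {X : Type*} [MeasurableSpace X]
    (P Q : Set (ProbabilityMeasure X)) : ℝ :=
  max (⨆ μ : P, ⨅ ν : Q, tvDist μ.1.toMeasure ν.1.toMeasure)
      (⨆ ν : Q, ⨅ μ : P, tvDist μ.1.toMeasure ν.1.toMeasure)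

def ConvexPM {X : Type*} [MeasurableSpace X] (P : Set (ProbabilityMeasure X)) : Prop :=
  ∀ μ ∈ P, ∀ ν ∈ P, ∀ a b : ℝ≥0∞, a + b = 1 →
    ∃ κ ∈ P, κ.toMeasure = a • μ.toMeasure + b • ν.toMeasure

def midSet {X : Type*} [MeasurableSpace X]
    (P Q : Set (ProbabilityMeasure X)) : Set (ProbabilityMeasure X) :=
  {κ | ∃ μ ∈ P, ∃ ν ∈ Q, κ.toMeasure = (2:ℝ≥0∞)⁻¹ • μ.toMeasure + (2:ℝ≥0∞)⁻¹ • ν.toMeasure}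

noncomputable def genJS {X : Type*} [MeasurableSpace X]
    (P Q : Set (ProbabilityMeasure X)) : EReal :=
  ((1/2 : ℝ) : EReal) * genKL P (midSet P Q) + ((1/2 : ℝ) : EReal) * genKL Q (midSet P Q)


open scoped BoundedContinuousFunction in
lemma aux_sub_one_le_mul_log {x : ℝ} (hx : 0 ≤ x) : x - 1 ≤ x * Real.log x := by
  rcases eq_or_lt_of_le hx with h | h
  · simp [← h]
  · have h1 : Real.log x⁻¹ ≤ x⁻¹ - 1 := Real.log_le_sub_one_of_pos (by positivity)
    rw [Real.log_inv] at h1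
    have h2 : x * (1 - x⁻¹) ≤ x * Real.log x := by
      apply mul_le_mul_of_nonneg_left _ hx
      linarith
    have h3 : x * (1 - x⁻¹) = x - 1 := by field_simp
    linarith

lemma aux_gibbs {X : Type*} [MeasurableSpace X] {μ ν : Measure X}
    [IsProbabilityMeasure μ] [IsProbabilityMeasure ν] (hac : μ ≪ ν)
    (hint : Integrable (llr μ ν) μ) : 0 ≤ ∫ x, llr μ ν x ∂μ := by
  have hint1 : Integrable (fun x => (μ.rnDeriv ν x).toReal • llr μ ν x) ν :=
    (integrable_rnDeriv_smul_iff hac).mpr hint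
  have hint2 : Integrable (fun x => (μ.rnDeriv ν x).toReal) ν :=
    Measure.integrable_toReal_rnDeriv
  have hmono : ∫ x, ((μ.rnDeriv ν x).toReal - 1) ∂ν
      ≤ ∫ x, (μ.rnDeriv ν x).toReal • llr μ ν x ∂ν := by
    refine integral_mono (hint2.sub (integrable_const 1)) hint1 fun x => ?_
    simpa [llr, smul_eq_mul] using aux_sub_one_le_mul_log (x := (μ.rnDeriv ν x).toReal)
      ENNReal.toReal_nonneg
  rw [integral_rnDeriv_smul hac] at hmono
  rw [integral_sub hint2 (integrable_const 1), Measure.integral_toReal_rnDeriv hac] at hmono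
  simpa using hmono

lemma aux_dv {X : Type*} [MeasurableSpace X] {μ ν : Measure X}
    [IsProbabilityMeasure μ] [IsProbabilityMeasure ν] (hac : μ ≪ ν)
    (hint : Integrable (llr μ ν) μ) {g : X → ℝ} (hgi : Integrable g μ)
    (hge : Integrable (fun x => Real.exp (g x)) ν) :
    ∫ x, g x ∂μ ≤ ∫ x, llr μ ν x ∂μ + Real.log (∫ x, Real.exp (g x) ∂ν) := by
  have hprob : IsProbabilityMeasure (ν.tilted g) := isProbabilityMeasure_tilted hge
  have hac' : μ ≪ ν.tilted g := hac.trans (absolutelyContinuous_tilted hge)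
  have hint' : Integrable (llr μ (ν.tilted g)) μ :=
    integrable_llr_tilted_right hac hgi hint hge
  have hkey := integral_llr_tilted_right hac hgi hge hint
  have h0 : 0 ≤ ∫ x, llr μ (ν.tilted g) x ∂μ := aux_gibbs hac' hint'
  rw [hkey] at h0
  linarith

lemma aux_exp_le (s : ℝ) : Real.exp s ≤ 1 + s + s ^ 2 * Real.exp |s| := by
  rcases le_or_gt 0 s with h | h
  · rw [abs_of_nonneg h]
    rcases lt_or_ge s 1 with h1 | h1
    · have h2 : 1 - s ≤ Real.exp (-s) := by linarith [Real.add_one_le_exp (-s)]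
      have h3 : Real.exp s * (1 - s) ≤ 1 := by
        calc Real.exp s * (1 - s) ≤ Real.exp s * Real.exp (-s) :=
              mul_le_mul_of_nonneg_left h2 (Real.exp_pos s).le
        _ = 1 := by rw [← Real.exp_add]; simp
      nlinarith [Real.exp_pos s]
    · have hs2 : (0:ℝ) ≤ s^2 - 1 := by nlinarith
      have := mul_nonneg (Real.exp_pos s).le hs2
      nlinarith
  · rw [abs_of_neg h]
    have h2 : 1 - s ≤ Real.exp (-s) := by linarith [Real.add_one_le_exp (-s)]
    have h3 : Real.exp s * (1 - s) ≤ 1 := by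
      calc Real.exp s * (1 - s) ≤ Real.exp s * Real.exp (-s) :=
            mul_le_mul_of_nonneg_left h2 (Real.exp_pos s).le
      _ = 1 := by rw [← Real.exp_add]; simp
    have h4 : (1:ℝ) ≤ Real.exp (-s) := by
      rw [Real.one_le_exp_iff]; linarith
    have hq : (0:ℝ) ≤ 1 + s + s^2 := by nlinarith [sq_nonneg (s+1), sq_nonneg s]
    have h5 : Real.exp s * (1-s) * (1+s+s^2) ≤ 1 + s + s^2 := by
      calc Real.exp s * (1-s) * (1+s+s^2) ≤ 1 * (1+s+s^2) :=
            mul_le_mul_of_nonneg_right h3 hq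
      _ = 1 + s + s^2 := one_mul _
    have h6 : Real.exp s ≤ 1 + s + s^2 := by
      have hcube : (0:ℝ) ≤ -s^3 := by nlinarith [sq_nonneg s]
      nlinarith [mul_nonneg (Real.exp_pos s).le hcube]
    have h7 : s^2 ≤ s^2 * Real.exp (-s) := by nlinarith [sq_nonneg s]
    linarith

lemma aux_klDiv_self {X : Type*} [MeasurableSpace X] (μ : Measure X)
    [IsProbabilityMeasure μ] : klDiv μ μ = 0 := by
  have h1 : (fun x => Real.log (μ.rnDeriv μ x).toReal) =ᵐ[μ] fun _ => (0:ℝ) := by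
    filter_upwards [Measure.rnDeriv_self μ] with x hx
    simp [hx]
  have h2 : Integrable (fun x => Real.log (μ.rnDeriv μ x).toReal) μ :=
    (integrable_congr h1).mpr (integrable_const 0)
  rw [klDiv, if_pos ⟨Measure.AbsolutelyContinuous.rfl, h2⟩, integral_congr_ae h1]
  simp

lemma aux_klDiv_nonneg {X : Type*} [MeasurableSpace X] (μ ν : Measure X)
    [IsProbabilityMeasure μ] [IsProbabilityMeasure ν] : 0 ≤ klDiv μ ν := by
  rw [klDiv]
  split_ifs with hc
  · have := aux_gibbs hc.1 hc.2
    exact_mod_cast this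
  · exact le_top

lemma aux_mem {X : Type*} [MeasurableSpace X] [TopologicalSpace X]
    [PolishSpace X] [BorelSpace X] (μ : ProbabilityMeasure X)
    (Q : Set (ProbabilityMeasure X)) (hQc : IsCompact Q)
    (hex : ∀ n : ℕ, ∃ ν ∈ Q, μ.toMeasure ≪ ν.toMeasure ∧
      Integrable (llr μ.toMeasure ν.toMeasure) μ.toMeasure ∧
      ∫ x, llr μ.toMeasure ν.toMeasure x ∂μ.toMeasure < 1/(n+1)) : μ ∈ Q := by
  choose νs hmem hac hint hkl using hex
  haveI : (Filter.map νs Filter.atTop).NeBot := Filter.map_neBot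
  have hle : Filter.map νs Filter.atTop ≤ 𝓟 Q :=
    Filter.le_principal_iff.mpr (Filter.mem_map.mpr
      (Filter.Eventually.of_forall hmem))
  obtain ⟨ν₀, hν₀Q, hcl⟩ := hQc.exists_clusterPt hle
  have key : ∀ h : X →ᵇ ℝ, ∫ x, h x ∂μ.toMeasure ≤ ∫ x, h x ∂ν₀.toMeasure := by
    intro h
    set M := ‖h‖ with hMdef
    have hM0 : (0:ℝ) ≤ M := norm_nonneg _
    set K := M^2 * Real.exp M with hKdef
    have hK0 : (0:ℝ) ≤ K := by positivity
    have habs : ∀ x, |h x| ≤ M := fun x => by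
      rw [← Real.norm_eq_abs]; exact h.norm_coe_le_norm x
    have step1 : ∀ t : ℝ, 0 < t → t ≤ 1 → ∀ n : ℕ,
        t * ∫ x, h x ∂μ.toMeasure ≤
          1/(n+1) + t * ∫ x, h x ∂(νs n).toMeasure + t^2 * K := by
      intro t ht ht1 n
      have hbnd : ∀ x, |t * h x| ≤ t * M := fun x => by
        rw [abs_mul, abs_of_pos ht]
        exact mul_le_mul_of_nonneg_left (habs x) ht.le
      have htM : t * M ≤ M := by nlinarith
      have hgi : Integrable (fun x => t * h x) μ.toMeasure := (h.integrable _).const_mul t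
      have hge : Integrable (fun x => Real.exp (t * h x)) (νs n).toMeasure := by
        refine Integrable.mono' (integrable_const (Real.exp M))
          ((Real.continuous_exp.comp (continuous_const.mul h.continuous)).aestronglyMeasurable)
          (ae_of_all _ fun x => ?_)
        rw [Real.norm_eq_abs, abs_of_pos (Real.exp_pos _)]
        exact Real.exp_le_exp.mpr (((le_abs_self _).trans (hbnd x)).trans htM)
      have hdv := aux_dv (hac n) (hint n) hgi hge
      have hpos : 0 < ∫ x, Real.exp (t * h x) ∂(νs n).toMeasure := integral_exp_pos hge
      have hub : ∫ x, Real.exp (t * h x) ∂(νs n).toMeasure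
          ≤ 1 + t * ∫ x, h x ∂(νs n).toMeasure + t^2 * K := by
        have hmono : ∫ x, Real.exp (t * h x) ∂(νs n).toMeasure
            ≤ ∫ x, (1 + t * h x + t^2 * K) ∂(νs n).toMeasure := by
          refine integral_mono hge
            (((integrable_const (1:ℝ)).add ((h.integrable _).const_mul t)).add
              (integrable_const _)) fun x => ?_
          calc Real.exp (t * h x) ≤ 1 + t * h x + (t * h x)^2 * Real.exp |t * h x| :=
                aux_exp_le _
          _ ≤ 1 + t * h x + t^2 * K := by
              have h1 : (t * h x)^2 ≤ t^2 * M^2 := by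
                have h2 := hbnd x
                nlinarith [abs_nonneg (t * h x), sq_abs (t * h x), abs_nonneg (h x)]
              have h2 : Real.exp |t * h x| ≤ Real.exp M :=
                Real.exp_le_exp.mpr ((hbnd x).trans htM)
              have h3 : (t * h x)^2 * Real.exp |t * h x| ≤ (t^2 * M^2) * Real.exp M :=
                mul_le_mul h1 h2 (Real.exp_pos _).le (by positivity)
              rw [hKdef]; nlinarith
        have hcalc : ∫ x, (1 + t * h x + t^2 * K) ∂(νs n).toMeasure
            = 1 + t * ∫ x, h x ∂(νs n).toMeasure + t^2 * K := by
          have e1 := integral_add (μ := (νs n).toMeasure)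
            (integrable_const (1 + t^2 * K)) ((h.integrable _).const_mul t)
          simp only [integral_const, integral_const_mul, measure_univ, probReal_univ,
            ENNReal.toReal_one, smul_eq_mul, one_mul] at e1
          calc ∫ x, (1 + t * h x + t^2 * K) ∂(νs n).toMeasure
              = ∫ x, ((1 + t^2 * K) + t * h x) ∂(νs n).toMeasure := by
                apply integral_congr_ae
                filter_upwards with x
                ring
          _ = (1 + t^2 * K) + t * ∫ x, h x ∂(νs n).toMeasure := e1
          _ = 1 + t * ∫ x, h x ∂(νs n).toMeasure + t^2 * K := by ring
        rw [hcalc] at hmono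
        exact hmono
      have hlog : Real.log (∫ x, Real.exp (t * h x) ∂(νs n).toMeasure)
          ≤ t * ∫ x, h x ∂(νs n).toMeasure + t^2 * K := by
        have := Real.log_le_sub_one_of_pos hpos
        linarith
      have hmul : ∫ x, t * h x ∂μ.toMeasure = t * ∫ x, h x ∂μ.toMeasure :=
        integral_const_mul _ _
      rw [hmul] at hdv
      linarith [hkl n]
    have step2 : ∀ t : ℝ, 0 < t → t ≤ 1 → ∀ ε : ℝ, 0 < ε →
        t * ∫ x, h x ∂μ.toMeasure
          ≤ ε + t * (∫ x, h x ∂ν₀.toMeasure + ε) + t^2 * K := by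
      intro t ht ht1 ε hε
      obtain ⟨N, hN⟩ := exists_nat_one_div_lt (K := ℝ) hε
      have hopen : IsOpen {ρ : ProbabilityMeasure X |
          ∫ x, h x ∂ρ.toMeasure < ∫ x, h x ∂ν₀.toMeasure + ε} :=
        isOpen_lt (ProbabilityMeasure.continuous_integral_boundedContinuousFunction h)
          continuous_const
      have hUmem : {ρ : ProbabilityMeasure X |
          ∫ x, h x ∂ρ.toMeasure < ∫ x, h x ∂ν₀.toMeasure + ε} ∈ 𝓝 ν₀ :=
        hopen.mem_nhds (by simp only [Set.mem_setOf_eq]; linarith)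
      have hV : νs '' Set.Ici N ∈ Filter.map νs Filter.atTop :=
        Filter.mem_map.mpr (Filter.mem_of_superset (Filter.mem_atTop N)
          (Set.subset_preimage_image νs (Set.Ici N)))
      obtain ⟨ρ, hρU, hρV⟩ := clusterPt_iff_nonempty.mp hcl hUmem hV
      obtain ⟨n, hnN, rfl⟩ := hρV
      have h1n : 1/((n:ℝ)+1) < ε := by
        refine lt_of_le_of_lt ?_ hN
        apply one_div_le_one_div_of_le (by positivity)
        exact_mod_cast Nat.succ_le_succ hnN
      have hs1 := step1 t ht ht1 n
      have hρU' : ∫ x, h x ∂(νs n).toMeasure < ∫ x, h x ∂ν₀.toMeasure + ε := hρU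
      have := mul_le_mul_of_nonneg_left hρU'.le ht.le
      linarith
    have step3 : ∀ t : ℝ, 0 < t → t ≤ 1 →
        ∫ x, h x ∂μ.toMeasure ≤ ∫ x, h x ∂ν₀.toMeasure + t * K := by
      intro t ht ht1
      have h1 : t * ∫ x, h x ∂μ.toMeasure
          ≤ t * (∫ x, h x ∂ν₀.toMeasure + t * K) := by
        refine le_of_forall_pos_le_add fun ε hε => ?_
        have := step2 t ht ht1 (ε/2) (by positivity)
        nlinarith
      exact le_of_mul_le_mul_left h1 ht
    refine le_of_forall_pos_le_add fun ε hε => ?_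
    have ht0 : (0:ℝ) < min 1 (ε/(K+1)) := lt_min one_pos (by positivity)
    have hs3 := step3 _ ht0 (min_le_left _ _)
    have hbd : min 1 (ε/(K+1)) * K ≤ ε := by
      calc min 1 (ε/(K+1)) * K ≤ (ε/(K+1)) * K :=
            mul_le_mul_of_nonneg_right (min_le_right _ _) hK0
      _ ≤ ε := by
          rw [div_mul_eq_mul_div, div_le_iff₀ (by positivity)]
          nlinarith
    linarith
  have heq : ∀ hb : X →ᵇ ℝ, ∫ x, hb x ∂μ.toMeasure = ∫ x, hb x ∂ν₀.toMeasure := by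
    intro hb
    refine le_antisymm (key hb) ?_
    have h2 := key (-hb)
    simp only [BoundedContinuousFunction.coe_neg, Pi.neg_apply] at h2
    rw [integral_neg, integral_neg] at h2
    linarith
  have hμν : μ.toMeasure = ν₀.toMeasure := by
    apply ext_of_forall_lintegral_eq_of_IsFiniteMeasure
    intro f
    have hfin1 : ∫⁻ x, (f x : ℝ≥0∞) ∂μ.toMeasure ≠ ⊤ :=
      (BoundedContinuousFunction.lintegral_lt_top_of_nnreal _ f).ne
    have hfin2 : ∫⁻ x, (f x : ℝ≥0∞) ∂ν₀.toMeasure ≠ ⊤ :=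
      (BoundedContinuousFunction.lintegral_lt_top_of_nnreal _ f).ne
    apply (ENNReal.toReal_eq_toReal_iff' hfin1 hfin2).mp
    rw [BoundedContinuousFunction.toReal_lintegral_coe_eq_integral,
      BoundedContinuousFunction.toReal_lintegral_coe_eq_integral]
    have hiso : Isometry ((↑) : NNReal → ℝ) := fun _ => congrFun rfl
    exact heq (BoundedContinuousFunction.comp _ hiso.lipschitz f)
  have : μ = ν₀ := MeasureTheory.ProbabilityMeasure.toMeasure_injective hμν
  rw [this]
  exact hν₀Q

lemma aux_genKL_self {X : Type*} [MeasurableSpace X]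
    (P : Set (ProbabilityMeasure X)) (hPne : P.Nonempty) : genKL P P = 0 := by
  refine le_antisymm ?_ ?_
  · refine iSup₂_le fun μ hμ => ?_
    refine le_trans (iInf₂_le μ hμ) ?_
    rw [aux_klDiv_self]
  · obtain ⟨μ, hμ⟩ := hPne
    calc (0:EReal) ≤ ⨅ ν ∈ P, klDiv μ.toMeasure ν.toMeasure :=
          le_iInf₂ fun ν _ => aux_klDiv_nonneg _ _
    _ ≤ genKL P P := le_iSup₂ (f := fun (μ : ProbabilityMeasure X) (_ : μ ∈ P) =>
          ⨅ ν ∈ P, klDiv μ.toMeasure ν.toMeasure) μ hμ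

lemma aux_subset {X : Type*} [MeasurableSpace X] [TopologicalSpace X]
    [PolishSpace X] [BorelSpace X] (P Q : Set (ProbabilityMeasure X))
    (hQc : IsCompact Q) (hPQ : genKL P Q = 0) : P ⊆ Q := by
  intro μ hμ
  have hinf0 : (⨅ ν ∈ Q, klDiv μ.toMeasure ν.toMeasure) = 0 := by
    refine le_antisymm ?_ (le_iInf₂ fun ν _ => aux_klDiv_nonneg _ _)
    rw [← hPQ]
    exact le_iSup₂ (f := fun (μ : ProbabilityMeasure X) (_ : μ ∈ P) =>
      ⨅ ν ∈ Q, klDiv μ.toMeasure ν.toMeasure) μ hμ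
  refine aux_mem μ Q hQc fun n => ?_
  have hlt : (⨅ ν ∈ Q, klDiv μ.toMeasure ν.toMeasure) < ((1/(n+1) : ℝ) : EReal) := by
    rw [hinf0]
    exact_mod_cast (by positivity : (0:ℝ) < 1/(n+1))
  obtain ⟨ν, hlt2⟩ := iInf_lt_iff.mp hlt
  obtain ⟨hνQ, hlt3⟩ := iInf_lt_iff.mp hlt2
  by_cases hc : μ.toMeasure ≪ ν.toMeasure ∧
      Integrable (fun x => Real.log (μ.toMeasure.rnDeriv ν.toMeasure x).toReal) μ.toMeasure
  · rw [klDiv, if_pos hc] at hlt3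
    exact ⟨ν, hνQ, hc.1, hc.2, EReal.coe_lt_coe_iff.mp hlt3⟩
  · rw [klDiv, if_neg hc] at hlt3
    exact absurd hlt3 (not_top_lt)

theorem genKL_both_zero_iff_eq {X : Type*} [MeasurableSpace X] [TopologicalSpace X]
    [PolishSpace X] [BorelSpace X] (P Q : Set (ProbabilityMeasure X))
    (hPne : P.Nonempty) (hQne : Q.Nonempty) (hPc : IsCompact P) (hQc : IsCompact Q)
    (hPconv : ConvexPM P) (hQconv : ConvexPM Q) :
    (genKL P Q = 0 ∧ genKL Q P = 0) ↔ P = Q := by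
  constructor
  · rintro ⟨h1, h2⟩
    exact Set.Subset.antisymm (aux_subset P Q hQc h1) (aux_subset Q P hPc h2)
  · rintro rfl
    exact ⟨aux_genKL_self P hPne, aux_genKL_self P hPne⟩
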